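/- Let a > 1, δ > 1 and r > a^{1/δ}·δ·(δ−1)^{(1/δ)−1}, and define H_a(u) = r·u^δ/(a+u^δ) and H(u) = r·u^δ/(1+u^δ) for u ≥ 0. Then H_a has exactly two positive fixed points A^a < K^a and H has exactly two positive fixed points A < K, and these satisfy 0 < A < A^a < K^a < K. -/

import Mathlib

open Real Set

/-- Generalized sigmoid Beverton–Holt maps `H_a(u) = r u^δ/(a+u^δ)` and
`H(u) = r u^δ/(1+u^δ)` with `a > 1`, `δ > 1`, `r > a^{1/δ} δ (δ-1)^{1/δ-1}`:
each has exactly two positive fixed points, interlaced as `0 < A < A^a < K^a < K`. -/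
theorem stmt_3 (r a δ : ℝ) (ha : 1 < a) (hδ : 1 < δ)
    (hr : r > a ^ (1 / δ) * δ * (δ - 1) ^ (1 / δ - 1))
    (Ha H : ℝ → ℝ)
    (hHa : ∀ u : ℝ, Ha u = r * u ^ δ / (a + u ^ δ))
    (hH : ∀ u : ℝ, H u = r * u ^ δ / (1 + u ^ δ)) :
    ∃ A Aa Ka K : ℝ, 0 < A ∧ A < Aa ∧ Aa < Ka ∧ Ka < K ∧
      Ha Aa = Aa ∧ Ha Ka = Ka ∧ H A = A ∧ H K = K ∧
      (∀ u : ℝ, 0 < u → Ha u = u → u = Aa ∨ u = Ka) ∧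
      (∀ u : ℝ, 0 < u → H u = u → u = A ∨ u = K) := by
  have hδ0 : (0:ℝ) < δ := by linarith
  have hδ1 : (0:ℝ) < δ - 1 := by linarith
  have ha0 : (0:ℝ) < a := by linarith
  have hm : 0 < a ^ (1/δ) * δ * (δ-1) ^ (1/δ - 1) := by positivity
  have hr0 : 0 < r := lt_trans hm hr
  -- helper: x^(δ-1) * x = x^δ
  have P : ∀ x : ℝ, 0 < x → x ^ (δ-1) * x = x ^ δ := by
    intro x hx
    rw [← Real.rpow_add_one (ne_of_gt hx)]
    congr 1
    ring
  set c : ℝ := r * (δ-1) / δ with hc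
  have hc0 : 0 < c := by positivity
  have hcr : c < r := by rw [hc, div_lt_iff₀ hδ0]; nlinarith
  set g : ℝ → ℝ := fun u => r * u ^ (δ-1) - u ^ δ with hg
  -- continuity
  have hcont : Continuous g := by
    apply Continuous.sub
    · exact continuous_const.mul (continuous_iff_continuousAt.2 fun x =>
        Real.continuousAt_rpow_const x _ (Or.inr (by linarith)))
    · exact continuous_iff_continuousAt.2 fun x =>
        Real.continuousAt_rpow_const x _ (Or.inr (by linarith))
  -- derivative
  have hderiv : ∀ u : ℝ, u ≠ 0 → HasDerivAt g (u ^ (δ-2) * (r * (δ-1) - δ * u)) u := by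
    intro u hu
    have h1 := (Real.hasDerivAt_rpow_const (p := δ-1) (Or.inl hu)).const_mul r
    have h2 := Real.hasDerivAt_rpow_const (p := δ) (x := u) (Or.inl hu)
    have h3 : HasDerivAt g _ u := h1.sub h2
    convert h3 using 1
    have e1 : δ - 1 - 1 = δ - 2 := by ring
    have e2 : δ - 1 = (δ - 2) + 1 := by ring
    rw [e1, e2, Real.rpow_add_one hu]
    ring
  have hmono : StrictMonoOn g (Icc 0 c) := by
    apply strictMonoOn_of_deriv_pos (convex_Icc 0 c) hcont.continuousOn
    intro u hu
    rw [interior_Icc] at hu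
    rw [(hderiv u (ne_of_gt hu.1)).deriv]
    have h4 : 0 < r * (δ-1) - δ * u := by
      have h5 := hu.2
      rw [hc, lt_div_iff₀ hδ0] at h5
      nlinarith
    exact mul_pos (Real.rpow_pos_of_pos hu.1 _) h4
  have hanti : StrictAntiOn g (Ici c) := by
    apply strictAntiOn_of_deriv_neg (convex_Ici c) hcont.continuousOn
    intro u hu
    rw [interior_Ici] at hu
    have hu0 : 0 < u := lt_trans hc0 hu
    rw [(hderiv u (ne_of_gt hu0)).deriv]
    apply mul_neg_of_pos_of_neg (Real.rpow_pos_of_pos hu0 _)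
    have h5 : c < u := hu
    rw [hc, div_lt_iff₀ hδ0] at h5
    nlinarith
  -- values
  have hg0 : g 0 = 0 := by
    simp [hg, Real.zero_rpow (ne_of_gt hδ1), Real.zero_rpow (ne_of_gt hδ0)]
  have hgc : a < g c := by
    have hmδ : (a ^ (1/δ) * δ * (δ-1) ^ (1/δ-1)) ^ δ = a * δ ^ δ * (δ-1) ^ (1-δ) := by
      rw [Real.mul_rpow (by positivity) (by positivity),
          Real.mul_rpow (by positivity) (by positivity),
          ← Real.rpow_mul ha0.le, ← Real.rpow_mul hδ1.le]
      have e1 : 1/δ * δ = 1 := by field_simp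
      have e2 : (1/δ - 1) * δ = 1 - δ := by field_simp
      rw [e1, e2, Real.rpow_one]
    have hrδ : a * δ ^ δ * (δ-1) ^ (1-δ) < r ^ δ := by
      rw [← hmδ]; exact Real.rpow_lt_rpow hm.le hr hδ0
    have hgcval : g c = r ^ δ * (δ-1) ^ (δ-1) / δ ^ δ := by
      have hcpow : c ^ (δ-1) = r ^ (δ-1) * (δ-1) ^ (δ-1) / δ ^ (δ-1) := by
        rw [hc, Real.div_rpow (by positivity) hδ0.le,
            Real.mul_rpow hr0.le hδ1.le]
      show r * c ^ (δ-1) - c ^ δ = _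
      rw [← P c hc0, ← P r hr0, ← P δ hδ0, hcpow, hc]
      have hZ : δ ^ (δ-1) ≠ 0 := ne_of_gt (Real.rpow_pos_of_pos hδ0 _)
      field_simp
      ring
    rw [hgcval, lt_div_iff₀ (by positivity)]
    have hcancel : (δ-1) ^ (1-δ) * (δ-1) ^ (δ-1) = 1 := by
      rw [← Real.rpow_add hδ1]
      norm_num
    have h6 : (a * δ ^ δ * (δ-1) ^ (1-δ)) * (δ-1) ^ (δ-1) < r ^ δ * (δ-1) ^ (δ-1) :=
      mul_lt_mul_of_pos_right hrδ (Real.rpow_pos_of_pos hδ1 _)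
    calc a * δ ^ δ = (a * δ ^ δ * (δ-1) ^ (1-δ)) * (δ-1) ^ (δ-1) := by
          rw [mul_assoc (a * δ ^ δ), hcancel, mul_one]
      _ < r ^ δ * (δ-1) ^ (δ-1) := h6
  have hgr1 : g (r+1) < 0 := by
    show r * (r+1) ^ (δ-1) - (r+1) ^ δ < 0
    rw [← P (r+1) (by linarith)]
    have := Real.rpow_pos_of_pos (show (0:ℝ) < r + 1 by linarith) (δ-1)
    nlinarith
  -- IVT roots
  obtain ⟨A, hAmem, hgA⟩ : ∃ A ∈ Ioo (0:ℝ) c, g A = 1 := by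
    have hs := intermediate_value_Ioo hc0.le (hcont.continuousOn (s := Icc 0 c))
    have h1 : (1:ℝ) ∈ Ioo (g 0) (g c) := by rw [hg0]; exact ⟨one_pos, by linarith⟩
    obtain ⟨A, h1, h2⟩ := hs h1
    exact ⟨A, h1, h2⟩
  obtain ⟨Aa, hAamem, hgAa⟩ : ∃ Aa ∈ Ioo (0:ℝ) c, g Aa = a := by
    have hs := intermediate_value_Ioo hc0.le (hcont.continuousOn (s := Icc 0 c))
    have h1 : a ∈ Ioo (g 0) (g c) := by rw [hg0]; exact ⟨ha0, hgc⟩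
    obtain ⟨Aa, h1, h2⟩ := hs h1
    exact ⟨Aa, h1, h2⟩
  have hcr1 : c ≤ r + 1 := by linarith
  obtain ⟨K, hKmem, hgK⟩ : ∃ K ∈ Ioo c (r+1), g K = 1 := by
    have hs := intermediate_value_Ioo' hcr1 (hcont.continuousOn (s := Icc c (r+1)))
    have h1 : (1:ℝ) ∈ Ioo (g (r+1)) (g c) := ⟨by linarith, by linarith⟩
    obtain ⟨K, h1, h2⟩ := hs h1
    exact ⟨K, h1, h2⟩
  obtain ⟨Ka, hKamem, hgKa⟩ : ∃ Ka ∈ Ioo c (r+1), g Ka = a := by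
    have hs := intermediate_value_Ioo' hcr1 (hcont.continuousOn (s := Icc c (r+1)))
    have h1 : a ∈ Ioo (g (r+1)) (g c) := ⟨by linarith, hgc⟩
    obtain ⟨Ka, h1, h2⟩ := hs h1
    exact ⟨Ka, h1, h2⟩
  -- memberships
  have hAicc : A ∈ Icc 0 c := ⟨hAmem.1.le, hAmem.2.le⟩
  have hAaicc : Aa ∈ Icc 0 c := ⟨hAamem.1.le, hAamem.2.le⟩
  have hKici : K ∈ Ici c := hKmem.1.le
  have hKaici : Ka ∈ Ici c := hKamem.1.le
  -- ordering
  have hAAa : A < Aa := (hmono.lt_iff_lt hAicc hAaicc).1 (by rw [hgA, hgAa]; exact ha)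
  have hKaK : Ka < K := (hanti.lt_iff_gt hKici hKaici).1 (by rw [hgK, hgKa]; exact ha)
  have hAaKa : Aa < Ka := lt_trans hAamem.2 hKamem.1
  -- fixed point equivalence
  have hfix : ∀ b : ℝ, 0 < b → ∀ u : ℝ, 0 < u → (r * u ^ δ / (b + u ^ δ) = u ↔ g u = b) := by
    intro b hb u hu
    have hupos : (0:ℝ) < u ^ δ := Real.rpow_pos_of_pos hu δ
    have hne : b + u ^ δ ≠ 0 := by positivity
    rw [div_eq_iff hne]
    show _ ↔ r * u ^ (δ-1) - u ^ δ = b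
    have hud : u ^ (δ - 1) = u ^ δ / u := by
      rw [Real.rpow_sub hu, Real.rpow_one]
    rw [hud]
    have hX : u ^ δ = u ^ δ := rfl
    generalize u ^ δ = X at hupos ⊢
    constructor
    · intro h
      field_simp
      linear_combination h
    · intro h
      field_simp at h
      linear_combination h
  -- conclude
  refine ⟨A, Aa, Ka, K, hAmem.1, hAAa, hAaKa, hKaK, ?_, ?_, ?_, ?_, ?_, ?_⟩
  · rw [hHa]; exact (hfix a ha0 Aa hAamem.1).2 hgAa
  · rw [hHa]; exact (hfix a ha0 Ka (lt_trans hc0 hKamem.1)).2 hgKa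
  · rw [hH]; exact (hfix 1 one_pos A hAmem.1).2 hgA
  · rw [hH]; exact (hfix 1 one_pos K (lt_trans hc0 hKmem.1)).2 hgK
  · intro u hu hfu
    have hgu : g u = a := (hfix a ha0 u hu).1 (by rw [← hHa u]; exact hfu)
    rcases le_or_gt u c with h | h
    · exact Or.inl (hmono.injOn ⟨hu.le, h⟩ hAaicc (hgu.trans hgAa.symm))
    · exact Or.inr (hanti.injOn h.le hKaici (hgu.trans hgKa.symm))
  · intro u hu hfu
    have hgu : g u = 1 := (hfix 1 one_pos u hu).1 (by rw [← hH u]; exact hfu)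
    rcases le_or_gt u c with h | h
    · exact Or.inl (hmono.injOn ⟨hu.le, h⟩ hAicc (hgu.trans hgA.symm))
    · exact Or.inr (hanti.injOn h.le hKici (hgu.trans hgK.symm))
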